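/- There exists a constant C > 0 such that for all real x ≥ 2, |∑_{n ≤ x} Φ(n) log(x/n) − ∫₁ˣ S_φ(t)/t dt| ≤ C x, i.e. the Riesz-type weighted sum T^r_φ(x) = ∑_{n ≤ x} Φ(n) log(x/n) satisfies T^r_φ(x) = ∫₁ˣ S_φ(t)/t dt + O(x). -/

import Mathlib

open Finset Filter MeasureTheory

/-- The Euler totient function with the convention `φ(0) = 1`. -/
def phi0 : ℕ → ℤ := fun n => if n = 0 then 1 else (Nat.totient n : ℤ)

/-- `Φ(n) = ∑_{d | n} (φ(d) − φ(d−1))`, the sum over positive divisors `d` of `n`. -/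
def PhiFun (n : ℕ) : ℤ := ∑ d ∈ n.divisors, (phi0 d - phi0 (d - 1))

/-- `S_φ(t) = ∑_{n ≤ t} φ(⌊t/n⌋)`, the sum over positive integers `n ≤ t`. -/
noncomputable def Sphi (t : ℝ) : ℝ :=
  ∑ n ∈ Finset.Icc 1 ⌊t⌋₊, (Nat.totient ⌊t / (n : ℝ)⌋₊ : ℝ)

lemma key (N : ℕ) :
    ∑ n ∈ Icc 1 N, PhiFun n = (∑ n ∈ Icc 1 N, (Nat.totient (N / n) : ℤ)) - N := by
  induction N with
  | zero => simp
  | succ N ih =>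
    rw [Finset.sum_Icc_succ_top (Nat.le_add_left 1 N), Finset.sum_Icc_succ_top (Nat.le_add_left 1 N), ih]
    have hsub : (N+1).divisors.erase (N+1) ⊆ Icc 1 N := by
      intro n hn
      have hn' := Nat.mem_divisors.mp (Finset.mem_of_mem_erase hn)
      have hne : n ≠ N+1 := Finset.ne_of_mem_erase hn
      have h1 := Nat.le_of_dvd (Nat.succ_pos N) hn'.1
      have h2 := Nat.pos_of_dvd_of_pos hn'.1 (Nat.succ_pos N)
      exact Finset.mem_Icc.mpr ⟨h2, by omega⟩
    have hzero : ∀ n ∈ Icc 1 N, n ∉ (N+1).divisors.erase (N+1) →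
        ((Nat.totient ((N+1) / n) : ℤ) - (Nat.totient (N / n) : ℤ)) = 0 := by
      intro n hn hn2
      have hnd : ¬ n ∣ (N+1) := by
        intro hd
        exact hn2 (Finset.mem_erase.mpr ⟨by
          rw [Finset.mem_Icc] at hn; omega, Nat.mem_divisors.mpr ⟨hd, Nat.succ_ne_zero N⟩⟩)
      rw [Nat.succ_div_of_not_dvd hnd]
      ring
    have hdvd : ∑ n ∈ Icc 1 N, ((Nat.totient ((N+1) / n) : ℤ) - (Nat.totient (N / n) : ℤ))
        = PhiFun (N+1) := by
      rw [← Finset.sum_subset hsub hzero]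
      have h1 : ∀ n ∈ (N+1).divisors.erase (N+1),
          ((Nat.totient ((N+1) / n) : ℤ) - (Nat.totient (N / n) : ℤ))
            = phi0 ((N+1)/n) - phi0 ((N+1)/n - 1) := by
        intro n hn
        have hn' := Nat.mem_divisors.mp (Finset.mem_of_mem_erase hn)
        have hne : n ≠ N+1 := Finset.ne_of_mem_erase hn
        have hdv : n ∣ N+1 := hn'.1
        have hnpos : 0 < n := Nat.pos_of_dvd_of_pos hdv (Nat.succ_pos N)
        have hNn : N / n = (N+1)/n - 1 := by
          rw [Nat.succ_div_of_dvd hdv, Nat.add_sub_cancel]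
        have hq2 : 2 ≤ (N+1)/n := by
          obtain ⟨k, hk⟩ := hdv
          have hk0 : k ≠ 0 := by rintro rfl; omega
          have hk1 : k ≠ 1 := by rintro rfl; omega
          rw [hk, Nat.mul_div_cancel_left _ hnpos]
          omega
        rw [hNn]
        unfold phi0
        rw [if_neg (by omega), if_neg (by omega)]
      rw [Finset.sum_congr rfl h1]
      have h2 : ∑ n ∈ (N+1).divisors, (phi0 ((N+1)/n) - phi0 ((N+1)/n - 1))
          = PhiFun (N+1) := by
        rw [Nat.sum_div_divisors (N+1) (fun d => phi0 d - phi0 (d-1))]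
        rfl
      rw [← h2, ← Finset.sum_erase (N+1).divisors (a := N+1) (by simp [phi0])]
    have hNN : (Nat.totient ((N+1)/(N+1)) : ℤ) = 1 := by
      rw [Nat.div_self (Nat.succ_pos N)]; simp
    rw [Finset.sum_sub_distrib] at hdvd
    push_cast
    omega

lemma Sphi_eq (t : ℝ) : Sphi t = ∑ n ∈ Icc 1 ⌊t⌋₊, (Nat.totient (⌊t⌋₊ / n) : ℝ) := by
  unfold Sphi
  refine Finset.sum_congr rfl fun n _ => ?_
  rw [Nat.floor_div_natCast]

lemma g_eq {x t : ℝ} (h1 : 1 ≤ t) (hx : t ≤ x) :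
    ∑ n ∈ Icc 1 ⌊x⌋₊, (PhiFun n : ℝ) * (if (n:ℝ) ≤ t then 1/t else 0)
      = Sphi t / t - (⌊t⌋₊ : ℝ) / t := by
  have ht0 : (0:ℝ) ≤ t := by linarith
  have step1 : ∀ n ∈ Icc 1 ⌊x⌋₊, (PhiFun n : ℝ) * (if (n:ℝ) ≤ t then 1/t else 0)
      = if n ∈ Icc 1 ⌊t⌋₊ then (PhiFun n : ℝ) / t else 0 := by
    intro n hn
    rw [Finset.mem_Icc] at hn
    by_cases h : (n:ℝ) ≤ t
    · rw [if_pos h, if_pos (Finset.mem_Icc.mpr ⟨hn.1, Nat.le_floor h⟩)]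
      ring
    · rw [if_neg h, if_neg (by
        rw [Finset.mem_Icc]
        rintro ⟨-, h2⟩
        exact h (le_trans (by exact_mod_cast Nat.cast_le.mpr h2) (Nat.floor_le ht0)))]
      ring
  rw [Finset.sum_congr rfl step1, Finset.sum_ite_mem]
  have hinter : Icc 1 ⌊x⌋₊ ∩ Icc 1 ⌊t⌋₊ = Icc 1 ⌊t⌋₊ := by
    apply Finset.inter_eq_right.mpr
    apply Finset.Icc_subset_Icc le_rfl (Nat.floor_mono hx)
  rw [hinter, ← Finset.sum_div]
  have hkey := key ⌊t⌋₊
  have hcast : (∑ n ∈ Icc 1 ⌊t⌋₊, (PhiFun n : ℝ))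
      = (∑ n ∈ Icc 1 ⌊t⌋₊, (Nat.totient (⌊t⌋₊ / n) : ℝ)) - (⌊t⌋₊ : ℝ) := by
    exact_mod_cast congrArg (fun z : ℤ => (z : ℝ)) hkey
  rw [hcast, Sphi_eq, sub_div]

lemma intInt_fn (n : ℕ) {a b : ℝ} (ha : 0 < a) (hb : 0 < b) :
    IntervalIntegrable (fun t : ℝ => if (n:ℝ) ≤ t then 1/t else 0) volume a b := by
  have heq : (fun t : ℝ => if (n:ℝ) ≤ t then 1/t else 0)
      = Set.indicator (Set.Ici (n:ℝ)) (fun t => 1/t) := by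
    funext t; simp [Set.indicator_apply]
  rw [heq, intervalIntegrable_iff]
  have hint : IntegrableOn (fun t : ℝ => 1/t) (Set.uIoc a b) := by
    rw [← intervalIntegrable_iff]
    apply intervalIntegral.intervalIntegrable_one_div (f := fun t : ℝ => t)
    · intro x hx
      rcases Set.mem_uIcc.mp hx with h | h
      · nlinarith [h.1, h.2]
      · nlinarith [h.1, h.2]
    · exact continuousOn_id
  exact hint.indicator measurableSet_Ici

lemma int_fn {x : ℝ} (n : ℕ) (hn : 1 ≤ n) (hnx : (n:ℝ) ≤ x) :
    ∫ t in (1:ℝ)..x, (if (n:ℝ) ≤ t then 1/t else 0) = Real.log (x / n) := by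
  have h1n : (1:ℝ) ≤ (n:ℝ) := by exact_mod_cast hn
  have hx0 : (0:ℝ) < x := by linarith
  rw [← intervalIntegral.integral_add_adjacent_intervals (b := (n:ℝ))
    (intInt_fn n one_pos (by linarith)) (intInt_fn n (by linarith) hx0)]
  have hA : ∫ t in (1:ℝ)..(n:ℝ), (if (n:ℝ) ≤ t then 1/t else 0) = 0 := by
    rw [intervalIntegral.integral_congr_ae (g := fun _ => 0), intervalIntegral.integral_const,
      smul_zero]
    have h0 : ∀ᵐ t : ℝ, t ≠ (n:ℝ) := by
      rw [MeasureTheory.ae_iff]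
      simpa using measure_singleton (n:ℝ)
    filter_upwards [h0] with t ht htmem
    rw [Set.uIoc_of_le h1n] at htmem
    rw [if_neg (by push_neg; exact lt_of_le_of_ne htmem.2 ht)]
  have hB : ∫ t in (n:ℝ)..x, (if (n:ℝ) ≤ t then 1/t else 0) = Real.log (x / n) := by
    rw [intervalIntegral.integral_congr (g := fun t => 1/t)]
    · exact integral_one_div (by
        rw [Set.uIcc_of_le hnx]
        rintro ⟨h1, h2⟩
        linarith)
    · intro t ht
      rw [Set.uIcc_of_le hnx] at ht
      simp only []
      rw [if_pos ht.1]
  rw [hA, hB, zero_add]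

lemma intInt_of_bounded {f : ℝ → ℝ} {a b C : ℝ} (hm : Measurable f)
    (hC : ∀ t ∈ Set.uIoc a b, |f t| ≤ C) : IntervalIntegrable f volume a b := by
  rw [intervalIntegrable_iff]
  refine Integrable.mono' (g := fun _ => C) ((MeasureTheory.integrableOn_const_iff).mpr (Or.inr ?_)) hm.aestronglyMeasurable ?_
  · exact measure_Ioc_lt_top
  · filter_upwards [ae_restrict_mem measurableSet_uIoc] with t ht
    simpa [Real.norm_eq_abs] using hC t ht

lemma h_meas : Measurable (fun t : ℝ => (⌊t⌋₊ : ℝ) / t) := by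
  apply Measurable.div
  · exact measurable_from_top.comp Nat.measurable_floor
  · exact measurable_id

/-- The Riesz-type weighted sum `T^r_φ(x) = ∑_{n ≤ x} Φ(n) log(x/n)` satisfies
`T^r_φ(x) = ∫₁ˣ S_φ(t)/t dt + O(x)` for `x ≥ 2`. -/
theorem stmt19 :
    ∃ C : ℝ, 0 < C ∧ ∀ x : ℝ, 2 ≤ x →
      |(∑ n ∈ Finset.Icc 1 ⌊x⌋₊, (PhiFun n : ℝ) * Real.log (x / (n : ℝ)))
          - ∫ t in (1:ℝ)..x, Sphi t / t|
        ≤ C * x := by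
  refine ⟨1, one_pos, fun x hx => ?_⟩
  have hx1 : (1:ℝ) ≤ x := by linarith
  have hx0 : (0:ℝ) ≤ x := by linarith
  set g : ℝ → ℝ := fun t => ∑ n ∈ Icc 1 ⌊x⌋₊, (PhiFun n : ℝ) * (if (n:ℝ) ≤ t then 1/t else 0)
    with hg
  have hgint : ∀ n ∈ Icc 1 ⌊x⌋₊, IntervalIntegrable
      (fun t => (PhiFun n : ℝ) * (if (n:ℝ) ≤ t then 1/t else 0)) volume 1 x :=
    fun n _ => (intInt_fn n one_pos (by linarith)).const_mul _
  have hfun : g = ∑ n ∈ Icc 1 ⌊x⌋₊,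
      (fun t => (PhiFun n : ℝ) * (if (n:ℝ) ≤ t then 1/t else 0)) := by
    funext t
    rw [hg]
    simp [Finset.sum_apply]
  have hgI : IntervalIntegrable g volume 1 x := by
    rw [hfun]
    exact IntervalIntegrable.sum _ hgint
  have hT : (∑ n ∈ Finset.Icc 1 ⌊x⌋₊, (PhiFun n : ℝ) * Real.log (x / (n : ℝ)))
      = ∫ t in (1:ℝ)..x, g t := by
    rw [hg]
    rw [intervalIntegral.integral_finset_sum hgint]
    refine Finset.sum_congr rfl fun n hn => ?_
    rw [Finset.mem_Icc] at hn
    have hnx : (n:ℝ) ≤ x := (Nat.le_floor_iff hx0).mp hn.2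
    rw [intervalIntegral.integral_const_mul, int_fn n hn.1 hnx]
  have hhI : IntervalIntegrable (fun t : ℝ => (⌊t⌋₊ : ℝ) / t) volume 1 x := by
    apply intInt_of_bounded h_meas (C := 1)
    intro t ht
    rw [Set.uIoc_of_le hx1] at ht
    have h0t : (0:ℝ) < t := by linarith [ht.1]
    rw [abs_of_nonneg (by positivity)]
    rw [div_le_one h0t]
    exact Nat.floor_le h0t.le
  have hSphi : Set.EqOn (fun t => Sphi t / t) (fun t => g t + (⌊t⌋₊ : ℝ) / t)
      (Set.uIcc 1 x) := by
    rw [Set.uIcc_of_le hx1]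
    intro t ht
    simp only [hg]
    rw [g_eq ht.1 ht.2]
    ring
  have hsplit : (∫ t in (1:ℝ)..x, Sphi t / t)
      = (∫ t in (1:ℝ)..x, g t) + ∫ t in (1:ℝ)..x, (⌊t⌋₊ : ℝ) / t := by
    rw [intervalIntegral.integral_congr hSphi, intervalIntegral.integral_add hgI hhI]
  rw [hT, hsplit]
  have hbound : ‖∫ t in (1:ℝ)..x, (⌊t⌋₊ : ℝ) / t‖ ≤ 1 * |x - 1| := by
    apply intervalIntegral.norm_integral_le_of_norm_le_const
    intro t ht
    rw [Set.uIoc_of_le hx1] at ht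
    have h0t : (0:ℝ) < t := by linarith [ht.1]
    rw [Real.norm_eq_abs, abs_of_nonneg (by positivity), div_le_one h0t]
    exact Nat.floor_le h0t.le
  rw [Real.norm_eq_abs] at hbound
  have : |(∫ t in (1:ℝ)..x, g t) - ((∫ t in (1:ℝ)..x, g t) + ∫ t in (1:ℝ)..x, (⌊t⌋₊ : ℝ) / t)|
      = |∫ t in (1:ℝ)..x, (⌊t⌋₊ : ℝ) / t| := by
    rw [sub_add_eq_sub_sub, sub_self, zero_sub, abs_neg]
  rw [this]
  rw [abs_of_nonneg (by linarith : (0:ℝ) ≤ x - 1), one_mul] at hbound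
  linarith
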